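/- arXiv:1403.1355 — 3 statements merged into one kernel-verified Lean document; each statement's English description precedes it below -/
import Mathlib

section
/- Let V be a finite-dimensional real inner product space and let ρ > 0. Define s : [0,ρ) → [0,∞) by s(x) = x/(ρ−x), and define the parametrized collapse map c : sa⁺(V) × S^V → S^V by c(F, v) = v + s(‖F(v)‖)·F(v) if v ≠ ∞ and ‖F(v)‖ < ρ, and c(F, v) = ∞ otherwise. Then c is a continuous map. -/
open scoped RealInnerProductSpace
open Filter Topology

/-- The parametrized collapse map `c : sa⁺(V) × S^V → S^V`:
`c(F, v) = v + s(‖F v‖) • F v` if `v ≠ ∞` and `‖F v‖ < ρ`, and `∞` otherwise,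
where `s(x) = x / (ρ - x)`. -/
noncomputable def collapse {V : Type*} [NormedAddCommGroup V] [InnerProductSpace ℝ V]
    (ρ : ℝ) (F : V →L[ℝ] V) : OnePoint V → OnePoint V
  | OnePoint.infty => OnePoint.infty
  | OnePoint.some v =>
      if ‖F v‖ < ρ then OnePoint.some (v + (‖F v‖ / (ρ - ‖F v‖)) • F v)
      else OnePoint.infty

section aux
variable {V : Type*} [NormedAddCommGroup V] [InnerProductSpace ℝ V]

lemma collapse_coe_eq (ρ : ℝ) (F : V →L[ℝ] V) (v : V) :
    collapse ρ F (v : OnePoint V) =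
      if ‖F v‖ < ρ then ((v + (‖F v‖ / (ρ - ‖F v‖)) • F v : V) : OnePoint V)
      else OnePoint.infty := rfl

lemma collapse_infty_eq (ρ : ℝ) (F : V →L[ℝ] V) :
    collapse ρ F OnePoint.infty = OnePoint.infty := rfl

lemma collapse_aux_norm_le {ρ : ℝ} {F : V →L[ℝ] V} (hpsd : ∀ v : V, 0 ≤ ⟪F v, v⟫)
    {w : V} (h : ‖F w‖ < ρ) : ‖w‖ ≤ ‖w + (‖F w‖ / (ρ - ‖F w‖)) • F w‖ := by
  set c : ℝ := ‖F w‖ / (ρ - ‖F w‖) with hc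
  have hc0 : 0 ≤ c := div_nonneg (norm_nonneg _) (by linarith)
  have h1 : (‖w‖ : ℝ) ^ 2 ≤ ⟪w + c • F w, w⟫ := by
    rw [inner_add_left, real_inner_smul_left, real_inner_self_eq_norm_sq]
    have h2 := hpsd w
    nlinarith [real_inner_comm (F w) w, mul_nonneg hc0 h2]
  have h3 : ⟪w + c • F w, w⟫ ≤ ‖w + c • F w‖ * ‖w‖ := real_inner_le_norm _ _
  nlinarith [norm_nonneg w, norm_nonneg (w + c • F w)]

lemma collapse_aux_sq_le {ρ : ℝ} {F : V →L[ℝ] V} (hpsd : ∀ v : V, 0 ≤ ⟪F v, v⟫)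
    {w : V} (h : ‖F w‖ < ρ) :
    ‖F w‖ ^ 2 ≤ ‖w + (‖F w‖ / (ρ - ‖F w‖)) • F w‖ * (ρ - ‖F w‖) := by
  set c : ℝ := ‖F w‖ / (ρ - ‖F w‖) with hc
  have hd : 0 < ρ - ‖F w‖ := by linarith
  have h1 : c * ‖F w‖ ^ 2 ≤ ⟪w + c • F w, F w⟫ := by
    rw [inner_add_left, real_inner_smul_left, real_inner_self_eq_norm_sq]
    have h2 := hpsd w
    nlinarith [real_inner_comm (F w) w]
  have h3 : ⟪w + c • F w, F w⟫ ≤ ‖w + c • F w‖ * ‖F w‖ := real_inner_le_norm _ _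
  rcases eq_or_lt_of_le (norm_nonneg (F w)) with h0 | h0
  · nlinarith [norm_nonneg (w + c • F w)]
  · have hcm : c * (ρ - ‖F w‖) = ‖F w‖ := div_mul_cancel₀ _ hd.ne'
    have h5 : c * ‖F w‖ ^ 2 ≤ ‖w + c • F w‖ * ‖F w‖ := le_trans h1 h3
    have h4 : c * ‖F w‖ ≤ ‖w + c • F w‖ := by nlinarith
    calc ‖F w‖ ^ 2 = (c * ‖F w‖) * (ρ - ‖F w‖) := by
          rw [mul_comm c, mul_assoc, hcm]; ring
      _ ≤ ‖w + c • F w‖ * (ρ - ‖F w‖) := by nlinarith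

end aux

/-- For a finite-dimensional real inner product space `V` and `ρ > 0`, the parametrized
collapse map is continuous on `sa⁺(V) × S^V`, where `sa⁺(V)` is the space of positive
semidefinite self-adjoint continuous linear endomorphisms of `V` and `S^V` is the
one-point compactification of `V`. -/
theorem collapse_continuous {V : Type*} [NormedAddCommGroup V] [InnerProductSpace ℝ V]
    [FiniteDimensional ℝ V] (ρ : ℝ) (hρ : 0 < ρ) :
    Continuous (fun p : {F : V →L[ℝ] V // (∀ v : V, 0 ≤ ⟪F v, v⟫) ∧
        ∀ v w : V, ⟪F v, w⟫ = ⟪v, F w⟫} × OnePoint V =>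
      collapse ρ p.1.1 p.2) := by
  set P := {F : V →L[ℝ] V // (∀ v : V, 0 ≤ ⟪F v, v⟫) ∧
      ∀ v w : V, ⟪F v, w⟫ = ⟪v, F w⟫} with hP
  have he : Continuous (fun q : P × V => (q.1.1 : V →L[ℝ] V) q.2) :=
    isBoundedBilinearMap_apply.continuous.comp
      ((continuous_subtype_val.comp continuous_fst).prodMk continuous_snd)
  have hn : Continuous (fun q : P × V => ‖(q.1.1 : V →L[ℝ] V) q.2‖) := he.norm
  rw [continuous_iff_continuousAt]
  rintro ⟨F, x⟩
  induction x using OnePoint.rec with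
  | infty =>
    rw [ContinuousAt]
    show Tendsto _ _ (𝓝 (OnePoint.infty : OnePoint V))
    apply OnePoint.hasBasis_nhds_infty.tendsto_right_iff.2
    rintro s ⟨hscl, hsc⟩
    obtain ⟨R, hR⟩ := hsc.isBounded.subset_closedBall 0
    have hU : ((↑) '' (Metric.closedBall (0:V) R)ᶜ ∪ {OnePoint.infty} : Set (OnePoint V))
        ∈ 𝓝 (OnePoint.infty : OnePoint V) :=
      OnePoint.hasBasis_nhds_infty.mem_of_mem
        ⟨Metric.isClosed_closedBall, isCompact_closedBall _ _⟩
    have h2 : ∀ᶠ p : P × OnePoint V in 𝓝 (F, OnePoint.infty),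
        p.2 ∈ ((↑) '' (Metric.closedBall (0:V) R)ᶜ ∪ {OnePoint.infty} : Set (OnePoint V)) :=
      (continuous_snd.tendsto _).eventually hU
    filter_upwards [h2] with p hp
    rcases hp with ⟨w, hw, hw2⟩ | hp
    · have hwR : R < ‖w‖ := by
        simpa [Metric.mem_closedBall, dist_zero_right, not_le] using hw
      rw [← hw2]
      by_cases hlt : ‖(p.1.1 : V →L[ℝ] V) w‖ < ρ
      · rw [collapse_coe_eq, if_pos hlt]
        refine Set.mem_union_left _ ⟨_, ?_, rfl⟩
        intro hmem
        have hsb := hR hmem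
        rw [Metric.mem_closedBall, dist_zero_right] at hsb
        have := collapse_aux_norm_le p.1.2.1 hlt
        linarith
      · rw [collapse_coe_eq, if_neg hlt]
        exact Set.mem_union_right _ rfl
    · have hp2 : p.2 = OnePoint.infty := hp
      rw [hp2, collapse_infty_eq]
      exact Set.mem_union_right _ rfl
  | coe v =>
    rw [ContinuousAt, nhds_prod_eq, OnePoint.nhds_coe_eq, Filter.prod_map_right,
      tendsto_map'_iff, ← nhds_prod_eq]
    show Tendsto ((fun p : P × OnePoint V => collapse ρ p.1.1 p.2) ∘
        Prod.map id ((↑) : V → OnePoint V)) (𝓝 (F, v))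
      (𝓝 (collapse ρ (F.1 : V →L[ℝ] V) ((v : V) : OnePoint V)))
    rw [collapse_coe_eq]
    by_cases h : ‖(F.1 : V →L[ℝ] V) v‖ < ρ
    · rw [if_pos h]
      have hne : ρ - ‖(F.1 : V →L[ℝ] V) v‖ ≠ 0 := by
        intro hc; rw [sub_eq_zero] at hc; linarith
      have hc : ContinuousAt (fun q : P × V =>
          (q.2 + (‖(q.1.1 : V →L[ℝ] V) q.2‖ / (ρ - ‖(q.1.1 : V →L[ℝ] V) q.2‖)) •
            (q.1.1 : V →L[ℝ] V) q.2 : V)) (F, v) :=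
        continuous_snd.continuousAt.add
          ((hn.continuousAt.div (continuousAt_const.sub hn.continuousAt) hne).smul
            he.continuousAt)
      have hev : ∀ᶠ q : P × V in 𝓝 (F, v), ‖(q.1.1 : V →L[ℝ] V) q.2‖ < ρ :=
        (isOpen_lt hn continuous_const).mem_nhds h
      have heq : ∀ᶠ q : P × V in 𝓝 (F, v),
          (((↑) : V → OnePoint V) ∘ fun q : P × V =>
            (q.2 + (‖(q.1.1 : V →L[ℝ] V) q.2‖ / (ρ - ‖(q.1.1 : V →L[ℝ] V) q.2‖)) •
              (q.1.1 : V →L[ℝ] V) q.2 : V)) q =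
          ((fun p : P × OnePoint V => collapse ρ p.1.1 p.2) ∘
            Prod.map id ((↑) : V → OnePoint V)) q := by
        filter_upwards [hev] with q hq
        show _ = collapse ρ (q.1.1 : V →L[ℝ] V) ((q.2 : V) : OnePoint V)
        rw [collapse_coe_eq, if_pos hq]
        rfl
      exact Filter.Tendsto.congr' heq (OnePoint.continuous_coe.continuousAt.comp hc)
    · rw [if_neg h]
      apply OnePoint.hasBasis_nhds_infty.tendsto_right_iff.2
      rintro s ⟨hscl, hsc⟩
      obtain ⟨R, hR⟩ := hsc.isBounded.subset_closedBall 0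
      set M : ℝ := max R 0 + 1 with hM
      have hM0 : 0 < M := by positivity
      set ε : ℝ := min (ρ/2) ((ρ/2)^2 / M) with hε
      have hε0 : 0 < ε := lt_min (by linarith) (by positivity)
      have hερ : ε ≤ ρ/2 := min_le_left _ _
      have hFv : ρ ≤ ‖(F.1 : V →L[ℝ] V) v‖ := not_lt.1 h
      have hev : ∀ᶠ q : P × V in 𝓝 (F, v), ρ - ε < ‖(q.1.1 : V →L[ℝ] V) q.2‖ :=
        (isOpen_lt continuous_const hn).mem_nhds (by simp only [Set.mem_setOf_eq]; linarith)
      filter_upwards [hev] with q hq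
      show collapse ρ (q.1.1 : V →L[ℝ] V) ((q.2 : V) : OnePoint V) ∈ _
      by_cases hlt : ‖(q.1.1 : V →L[ℝ] V) q.2‖ < ρ
      · rw [collapse_coe_eq, if_pos hlt]
        refine Set.mem_union_left _ ⟨_, ?_, rfl⟩
        intro hmem
        have hNR := hR hmem
        rw [Metric.mem_closedBall, dist_zero_right] at hNR
        set a : ℝ := ‖(q.1.1 : V →L[ℝ] V) q.2‖ with ha
        set N : ℝ := ‖q.2 + (a / (ρ - a)) • (q.1.1 : V →L[ℝ] V) q.2‖ with hN
        have key : a ^ 2 ≤ N * (ρ - a) := collapse_aux_sq_le q.1.2.1 hlt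
        have hd : 0 < ρ - a := by linarith
        have hdε : ρ - a ≤ ε := by linarith
        have haρ : ρ/2 ≤ a := by linarith
        have s1 : M * ε ≤ (ρ/2)^2 :=
          calc M * ε ≤ M * ((ρ/2)^2 / M) :=
                mul_le_mul_of_nonneg_left (min_le_right _ _) hM0.le
            _ = (ρ/2)^2 := mul_div_cancel₀ _ hM0.ne'
        have s2 : M ≤ (ρ/2)^2 / ε := (le_div_iff₀ hε0).2 s1
        have s3 : (ρ/2)^2 / ε ≤ a^2 / (ρ - a) :=
          div_le_div₀ (sq_nonneg a) (by nlinarith) hd hdε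
        have s4 : a^2 / (ρ - a) ≤ N := (div_le_iff₀ hd).2 key
        have hRM : R < M := by
          have := le_max_left R (0:ℝ); linarith
        linarith
      · rw [collapse_coe_eq, if_neg hlt]
        exact Set.mem_union_right _ rfl
end

section
/- Let V be a real inner product space, n ≥ 2, and let y = (y_1, …, y_n) ∈ V^n satisfy Σ_{i=1}^n y_i = 0 and Σ_{i=1}^n ‖y_i‖² = 1. Then there exist indices i, j ∈ {1, …, n} such that ‖y_i − y_j‖ ≥ 2/n^{3/2} (that is, ‖y_i − y_j‖ ≥ 4ρ, where ρ = 1/(2·n^{3/2})). -/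
/-- If `n ≥ 2` and `y = (y_1, …, y_n)` is a tuple of vectors in a real inner product
space with `Σ y_i = 0` and `Σ ‖y_i‖² = 1`, then there are indices `i, j` with
`‖y_i − y_j‖ ≥ 2 / n^(3/2) = 4ρ`, where `ρ = 1/(2·n^(3/2))`. -/
theorem exists_pair_norm_sub_ge {V : Type*} [NormedAddCommGroup V] [InnerProductSpace ℝ V]
    (n : ℕ) (hn : 2 ≤ n) (y : Fin n → V)
    (hsum : ∑ i, y i = 0) (hnorm : ∑ i, ‖y i‖ ^ 2 = 1) :
    ∃ i j : Fin n, 2 / (n : ℝ) ^ ((3 : ℝ) / 2) ≤ ‖y i - y j‖ := by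
  have hn0 : (0 : ℝ) < n := by positivity
  have hne : (Finset.univ : Finset (Fin n)).Nonempty := by
    simp [Finset.univ_nonempty_iff]
    exact Fin.pos_iff_nonempty.mp (by omega)
  -- find i with ‖y i‖² ≥ 1/n
  have h1 : ∑ i : Fin n, (1 / (n : ℝ) / n) ≤ ∑ i : Fin n, ‖y i‖ ^ 2 / n := by
    have hR : ∑ i : Fin n, ‖y i‖ ^ 2 / (n : ℝ) = 1 / n := by
      rw [← Finset.sum_div, hnorm]
    have hL : ∑ i : Fin n, (1 / (n : ℝ) / n) = 1 / n := by
      rw [Finset.sum_const, Finset.card_univ, Fintype.card_fin, nsmul_eq_mul]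
      field_simp
    rw [hL, hR]
  obtain ⟨i, _, hi⟩ := Finset.exists_le_of_sum_le hne h1
  have hi' : 1 / (n : ℝ) ≤ ‖y i‖ ^ 2 := by
    have := (div_le_div_iff_of_pos_right hn0).mp hi
    linarith
  -- find j with ‖y i‖ ≤ ‖y i - y j‖
  have hsum2 : ∑ j : Fin n, (y i - y j) = n • y i := by
    rw [Finset.sum_sub_distrib, hsum, sub_zero, Finset.sum_const, Finset.card_univ,
      Fintype.card_fin]
  have h2 : ∑ j : Fin n, ‖y i‖ ≤ ∑ j : Fin n, ‖y i - y j‖ := by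
    calc ∑ j : Fin n, ‖y i‖ = ‖(n : ℝ) • y i‖ := by
          rw [norm_smul, Finset.sum_const, Finset.card_univ, Fintype.card_fin,
            nsmul_eq_mul]
          simp [abs_of_pos hn0]
      _ = ‖∑ j : Fin n, (y i - y j)‖ := by rw [hsum2, ← Nat.cast_smul_eq_nsmul ℝ]
      _ ≤ ∑ j : Fin n, ‖y i - y j‖ := norm_sum_le _ _
  obtain ⟨j, _, hj⟩ := Finset.exists_le_of_sum_le hne h2
  have hA : Real.sqrt (1 / n) ≤ ‖y i‖ := by
    have := Real.sqrt_le_sqrt hi'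
    rwa [Real.sqrt_sq (norm_nonneg _)] at this
  have hB : 2 / (n : ℝ) ^ ((3 : ℝ) / 2) ≤ Real.sqrt (1 / n) := by
    have h32 : (n : ℝ) ^ ((3 : ℝ) / 2) = n * Real.sqrt n := by
      rw [show (3 : ℝ) / 2 = 1 + 1/2 by norm_num, Real.rpow_add hn0, Real.rpow_one]
      rw [Real.sqrt_eq_rpow]
    rw [h32, Real.sqrt_div' 1 (by positivity), Real.sqrt_one]
    rw [div_le_div_iff₀ (by positivity) (by positivity)]
    have hs : 0 < Real.sqrt n := Real.sqrt_pos.mpr hn0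
    calc 2 * Real.sqrt n ≤ (n : ℝ) * Real.sqrt n := by
          nlinarith [show (2:ℝ) ≤ n from by exact_mod_cast hn]
      _ ≤ (n : ℝ) * Real.sqrt n * 1 := by ring_nf; rfl
      _ ≤ _ := by
          nlinarith [Real.sq_sqrt hn0.le, Real.sqrt_le_sqrt (show (1:ℝ) ≤ n by exact_mod_cast hn.trans' (by norm_num))]
  exact ⟨i, j, hB.trans (hA.trans hj)⟩
end

section
/- Let V be a real inner product space, n ≥ 1, let y = (y_1, …, y_n) ∈ V^n satisfy Σ_{i=1}^n y_i = 0 and Σ_{i=1}^n ‖y_i‖² = 1, and let t ∈ [0,1]. With F_t = (1−t)·P(y) + t·Id_V and ρ = 1/(2·n^{3/2}), for every vector v ∈ V there exists an index i ∈ {1, …, n} such that ‖F_t(v − y_i)‖ ≥ ρ. (This is the content of the Lemma asserting that the point [c(F_t, v ⊖ y_1), …, c(F_t, v ⊖ y_n)] of Sp^n(S^V) always lies in the subspace Sp^{n−1}(S^V): at least one of the collapse-map values is the basepoint at infinity.) -/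
open scoped RealInnerProductSpace

/-- The linear operator `P(y)` on `V` associated to a tuple `y = (y_1, …, y_n)` of
vectors of `V`, given by `P(y)(v) = Σ_j ⟪v, y_j⟫ • y_j`. -/
noncomputable def Pmap {V : Type*} [NormedAddCommGroup V] [InnerProductSpace ℝ V]
    {n : ℕ} (y : Fin n → V) : V →ₗ[ℝ] V where
  toFun v := ∑ j, ⟪v, y j⟫ • y j
  map_add' u v := by
    simp [inner_add_left, add_smul, Finset.sum_add_distrib]
  map_smul' c v := by
    simp [real_inner_smul_left, mul_smul, Finset.smul_sum]

/-- If `y ∈ S(V,n)` (i.e. `Σ y_i = 0` and `Σ ‖y_i‖² = 1`) and `t ∈ [0,1]`, then with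
`F_t = (1−t)·P(y) + t·Id` and `ρ = 1/(2·n^(3/2))`, for every vector `v ∈ V` there exists
an index `i` with `‖F_t(v − y_i)‖ ≥ ρ`. -/
theorem exists_norm_Ft_sub_ge {V : Type*} [NormedAddCommGroup V] [InnerProductSpace ℝ V]
    (n : ℕ) (hn : 1 ≤ n) (y : Fin n → V)
    (hsum : ∑ i, y i = 0) (hnorm : ∑ i, ‖y i‖ ^ 2 = 1)
    (t : ℝ) (h0 : 0 ≤ t) (h1 : t ≤ 1) (v : V) :
    ∃ i : Fin n, 1 / (2 * (n : ℝ) ^ ((3 : ℝ) / 2)) ≤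
      ‖((1 - t) • Pmap y + t • (LinearMap.id : V →ₗ[ℝ] V)) (v - y i)‖ := by
  by_contra hcon
  push_neg at hcon
  set F : V →ₗ[ℝ] V := (1 - t) • Pmap y + t • LinearMap.id with hFdef
  set ρ : ℝ := 1 / (2 * (n : ℝ) ^ ((3 : ℝ) / 2)) with hρdef
  have hn0 : (0:ℝ) < n := by positivity
  -- the key sum
  have hS : ∑ i, ⟪y i, F (v - y i)⟫ = - ∑ i, ⟪y i, F (y i)⟫ := by
    have h0' : ∑ i, ⟪y i, F v⟫ = 0 := by
      rw [← sum_inner, hsum, inner_zero_left]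
    calc ∑ i, ⟪y i, F (v - y i)⟫
        = ∑ i, (⟪y i, F v⟫ - ⟪y i, F (y i)⟫) := by
          simp [map_sub, inner_sub_right]
      _ = ∑ i, ⟪y i, F v⟫ - ∑ i, ⟪y i, F (y i)⟫ := Finset.sum_sub_distrib _ _
      _ = - ∑ i, ⟪y i, F (y i)⟫ := by rw [h0']; ring
  -- lower bound on ∑ ⟪y i, F (y i)⟫
  have hP : ∀ i, (‖y i‖ ^ 2) ^ 2 ≤ ⟪y i, Pmap y (y i)⟫ := by
    intro i
    have heq : ⟪y i, Pmap y (y i)⟫ = ∑ j, ⟪y i, y j⟫ ^ 2 := by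
      simp [Pmap, inner_sum, real_inner_smul_right, sq, mul_comm]
    rw [heq]
    have := Finset.single_le_sum (f := fun j => ⟪y i, y j⟫ ^ 2)
      (fun j _ => sq_nonneg _) (Finset.mem_univ i)
    simpa [real_inner_self_eq_norm_sq] using this
  have hquart : 1 / (n : ℝ) ≤ ∑ i, (‖y i‖ ^ 2) ^ 2 := by
    have h := sq_sum_le_card_mul_sum_sq (s := Finset.univ)
      (f := fun i : Fin n => ‖y i‖ ^ 2)
    rw [hnorm] at h
    simp only [Finset.card_univ, Fintype.card_fin, one_pow] at h
    rw [div_le_iff₀ hn0]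
    linarith [h]
  have hlow : 1 / (n : ℝ) ≤ ∑ i, ⟪y i, F (y i)⟫ := by
    have hexp : ∀ i, ⟪y i, F (y i)⟫ = (1 - t) * ⟪y i, Pmap y (y i)⟫ + t * ‖y i‖ ^ 2 := by
      intro i
      simp [hFdef, inner_add_right, real_inner_smul_right, real_inner_self_eq_norm_sq]
    calc (1 : ℝ) / n ≤ (1 - t) * (1 / n) + t * 1 := by
          have h1n : (1 : ℝ) / n ≤ 1 := by
            rw [div_le_one hn0]; exact_mod_cast hn
          nlinarith
      _ ≤ (1 - t) * ∑ i, ⟪y i, Pmap y (y i)⟫ + t * ∑ i, ‖y i‖ ^ 2 := by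
          have hPsum : 1 / (n : ℝ) ≤ ∑ i, ⟪y i, Pmap y (y i)⟫ :=
            le_trans hquart (Finset.sum_le_sum fun i _ => hP i)
          rw [hnorm]
          have := sub_nonneg.mpr h1
          nlinarith
      _ = ∑ i, ⟪y i, F (y i)⟫ := by
          rw [Finset.mul_sum, Finset.mul_sum, ← Finset.sum_add_distrib]
          exact Finset.sum_congr rfl fun i _ => (hexp i).symm
  -- upper bound
  have hsumnorm : ∑ i, ‖y i‖ ≤ Real.sqrt n := by
    have h := sq_sum_le_card_mul_sum_sq (s := Finset.univ)
      (f := fun i : Fin n => ‖y i‖)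
    rw [hnorm] at h
    simp only [Finset.card_univ, Fintype.card_fin, mul_one] at h
    have hsn : (0:ℝ) ≤ ∑ i, ‖y i‖ := Finset.sum_nonneg fun i _ => norm_nonneg _
    exact (Real.le_sqrt hsn hn0.le).mpr h
  have hup : ∑ i, ⟪y i, F (y i)⟫ ≤ ρ * Real.sqrt n := by
    have habs : |∑ i, ⟪y i, F (v - y i)⟫| ≤ ρ * ∑ i, ‖y i‖ := by
      calc |∑ i, ⟪y i, F (v - y i)⟫| ≤ ∑ i, |⟪y i, F (v - y i)⟫| :=
            Finset.abs_sum_le_sum_abs _ _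
        _ ≤ ∑ i, ‖y i‖ * ρ := by
            apply Finset.sum_le_sum
            intro i _
            calc |⟪y i, F (v - y i)⟫| ≤ ‖y i‖ * ‖F (v - y i)‖ :=
                  abs_real_inner_le_norm _ _
              _ ≤ ‖y i‖ * ρ :=
                  mul_le_mul_of_nonneg_left (hcon i).le (norm_nonneg _)
        _ = ρ * ∑ i, ‖y i‖ := by rw [← Finset.sum_mul]; ring
    have hρ0 : 0 ≤ ρ := by positivity
    calc ∑ i, ⟪y i, F (y i)⟫ = - ∑ i, ⟪y i, F (v - y i)⟫ := by rw [hS]; ring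
      _ ≤ |∑ i, ⟪y i, F (v - y i)⟫| := neg_le_abs _
      _ ≤ ρ * ∑ i, ‖y i‖ := habs
      _ ≤ ρ * Real.sqrt n := mul_le_mul_of_nonneg_left hsumnorm hρ0
  have hrpow : (n : ℝ) ^ ((3 : ℝ) / 2) = n * Real.sqrt n := by
    rw [show ((3:ℝ)/2) = 1 + 1/2 by norm_num, Real.rpow_add hn0, Real.rpow_one,
      ← Real.sqrt_eq_rpow]
  have hsq0 : (0:ℝ) < Real.sqrt n := Real.sqrt_pos.mpr hn0
  have hval : ρ * Real.sqrt n = 1 / (2 * n) := by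
    rw [hρdef, hrpow]
    field_simp
  rw [hval] at hup
  have hfin := hlow.trans hup
  rw [div_le_div_iff₀ hn0 (by positivity)] at hfin
  linarith
end
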